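/- Let t₀ > 0 be the unique positive solution of cosh(t) = t·sinh(t). If 0 < h < r/sinh(t₀), then the equation rs = cosh(sh) has exactly two positive solutions s₁ < s₂. -/

import Mathlib

open Real

lemma strictConvexOn_cosh' : StrictConvexOn ℝ Set.univ Real.cosh := by
  apply strictConvexOn_of_deriv2_pos' convex_univ Real.continuous_cosh.continuousOn
  intro x _
  have : deriv^[2] Real.cosh = Real.cosh := by
    ext y
    simp [Function.iterate_succ, Real.deriv_cosh, Real.deriv_sinh]
  rw [this]
  exact Real.cosh_pos x

lemma three_zeros {r h a b c : ℝ} (hh : 0 < h) (hab : a < b) (hbc : b < c)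
    (ha : r * a = Real.cosh (a * h)) (hb : r * b = Real.cosh (b * h))
    (hc : r * c = Real.cosh (c * h)) : False := by
  have hac : a < c := hab.trans hbc
  set lam : ℝ := (c - b) / (c - a) with hlam
  set mu : ℝ := (b - a) / (c - a) with hmu
  have hca : (0:ℝ) < c - a := by linarith
  have hlam0 : 0 < lam := div_pos (by linarith) hca
  have hmu0 : 0 < mu := div_pos (by linarith) hca
  have hsum : lam + mu = 1 := by rw [hlam, hmu]; field_simp; ring
  have hcomb : lam * a + mu * c = b := by rw [hlam, hmu]; field_simp; ring
  have hne : a * h ≠ c * h := by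
    intro hx
    have := mul_right_cancel₀ (ne_of_gt hh) hx
    linarith
  have key := strictConvexOn_cosh'.2 (Set.mem_univ (a*h)) (Set.mem_univ (c*h)) hne hlam0 hmu0 hsum
  simp only [smul_eq_mul] at key
  have harg : lam * (a * h) + mu * (c * h) = b * h := by
    rw [show lam * (a * h) + mu * (c * h) = (lam * a + mu * c) * h by ring, hcomb]
  rw [harg, ← ha, ← hb, ← hc] at key
  have : lam * (r * a) + mu * (r * c) = r * b := by rw [← hcomb]; ring
  linarith

lemma cosh_quad {x : ℝ} (hx : 0 ≤ x) : 1 + x ^ 2 / 2 ≤ Real.cosh x := by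
  have hder : ∀ y : ℝ, HasDerivAt (fun t => Real.cosh t - (1 + t ^ 2 / 2))
      (Real.sinh y - y) y := by
    intro y
    have h1 : HasDerivAt (fun t : ℝ => Real.cosh t) (Real.sinh y) y := Real.hasDerivAt_cosh y
    have h2 : HasDerivAt (fun t : ℝ => 1 + t ^ 2 / 2) y y := by
      have := ((hasDerivAt_pow 2 y).div_const 2).const_add 1
      simpa using this
    exact h1.sub h2
  have hmono : MonotoneOn (fun t => Real.cosh t - (1 + t ^ 2 / 2)) (Set.Ici (0:ℝ)) := by
    apply monotoneOn_of_deriv_nonneg (convex_Ici 0)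
    · exact (Real.continuous_cosh.sub (by continuity)).continuousOn
    · intro y _
      exact (hder y).differentiableAt.differentiableWithinAt
    · intro y hy
      rw [interior_Ici] at hy
      rw [(hder y).deriv]
      have : y ≤ Real.sinh y := Real.self_le_sinh_iff.mpr (le_of_lt hy)
      linarith
  have := hmono (Set.self_mem_Ici) (Set.mem_Ici.mpr hx) hx
  simp [Real.cosh_zero] at this
  linarith

lemma g_strictAnti : StrictAntiOn (fun t => Real.cosh t - t * Real.sinh t) (Set.Ici (0:ℝ)) := by
  apply strictAntiOn_of_deriv_neg (convex_Ici 0)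
  · exact (Real.continuous_cosh.sub (continuous_id.mul Real.continuous_sinh)).continuousOn
  · intro y hy
    rw [interior_Ici] at hy
    have hder : HasDerivAt (fun t => Real.cosh t - t * Real.sinh t)
        (Real.sinh y - (1 * Real.sinh y + y * Real.cosh y)) y :=
      (Real.hasDerivAt_cosh y).sub ((hasDerivAt_id y).mul (Real.hasDerivAt_sinh y))
    rw [hder.deriv]
    have := Real.cosh_pos y
    nlinarith [Set.mem_Ioi.mp hy]

/-- If `t₀` is the unique positive solution of `cosh t = t·sinh t` and
`0 < h < r / sinh t₀`, then `rs = cosh(sh)` has exactly two positive solutions `s₁ < s₂`. -/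
theorem stmt1 (r h t₀ : ℝ) (hr : 0 < r) (hh : 0 < h) (ht₀ : 0 < t₀)
    (ht₀eq : Real.cosh t₀ = t₀ * Real.sinh t₀)
    (ht₀uniq : ∀ t, 0 < t → Real.cosh t = t * Real.sinh t → t = t₀)
    (hsmall : h < r / Real.sinh t₀) :
    ∃ s₁ s₂ : ℝ, 0 < s₁ ∧ s₁ < s₂ ∧
      r * s₁ = Real.cosh (s₁ * h) ∧ r * s₂ = Real.cosh (s₂ * h) ∧
      ∀ s, 0 < s → r * s = Real.cosh (s * h) → s = s₁ ∨ s = s₂ := by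
  set f : ℝ → ℝ := fun s => Real.cosh (s * h) - r * s with hf
  have hfc : Continuous f := by
    apply Real.continuous_cosh.comp (continuous_id.mul continuous_const) |>.sub
    exact continuous_const.mul continuous_id
  have hsinht₀ : 0 < Real.sinh t₀ := Real.sinh_pos_iff.mpr ht₀
  have hrh : Real.sinh t₀ < r / h := by
    rw [lt_div_iff₀ hh]
    calc Real.sinh t₀ * h < Real.sinh t₀ * (r / Real.sinh t₀) := by
          exact mul_lt_mul_of_pos_left hsmall hsinht₀
      _ = r := by field_simp
  set tstar : ℝ := Real.arsinh (r / h) with htstar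
  have hsinhstar : Real.sinh tstar = r / h := Real.sinh_arsinh _
  have ht₀star : t₀ < tstar := by
    rw [← Real.sinh_lt_sinh, hsinhstar]; exact hrh
  have htstarpos : 0 < tstar := ht₀.trans ht₀star
  set sstar : ℝ := tstar / h with hsstar
  have hsstarpos : 0 < sstar := div_pos htstarpos hh
  have hsh : sstar * h = tstar := by rw [hsstar]; field_simp
  have hfneg : f sstar < 0 := by
    have hrs : r * sstar = tstar * Real.sinh tstar := by
      rw [hsinhstar, hsstar]; ring
    have hval : f sstar = Real.cosh tstar - tstar * Real.sinh tstar := by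
      show Real.cosh (sstar * h) - r * sstar = _
      rw [hsh, hrs]
    rw [hval]
    have hg : Real.cosh tstar - tstar * Real.sinh tstar
        < Real.cosh t₀ - t₀ * Real.sinh t₀ :=
      g_strictAnti (Set.mem_Ici.mpr ht₀.le) (Set.mem_Ici.mpr htstarpos.le) ht₀star
    rw [← ht₀eq] at hg
    linarith
  have hf0 : f 0 = 1 := by simp [hf]
  -- first root in (0, sstar)
  obtain ⟨s₁, hs₁mem, hfs₁⟩ : ∃ s₁ ∈ Set.Icc (0:ℝ) sstar, f s₁ = 0 := by
    have := intermediate_value_Icc' hsstarpos.le hfc.continuousOn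
      (show (0:ℝ) ∈ Set.Icc (f sstar) (f 0) by rw [hf0]; exact ⟨hfneg.le, zero_le_one⟩)
    obtain ⟨x, hx, hfx⟩ := this
    exact ⟨x, hx, hfx⟩
  have hs₁pos : 0 < s₁ := by
    rcases lt_or_eq_of_le hs₁mem.1 with h' | h'
    · exact h'
    · exfalso; rw [← h'] at hfs₁; rw [hf0] at hfs₁; norm_num at hfs₁
  have hs₁lt : s₁ < sstar := by
    rcases lt_or_eq_of_le hs₁mem.2 with h' | h'
    · exact h'
    · exfalso; rw [h'] at hfs₁; linarith
  -- big point
  set S : ℝ := max (sstar + 1) (2 * r / h ^ 2) with hS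
  have hSstar : sstar < S := lt_of_lt_of_le (by linarith) (le_max_left _ _)
  have hSpos : 0 < S := hsstarpos.trans hSstar
  have hSbig : 2 * r / h ^ 2 ≤ S := le_max_right _ _
  have hfS : 0 < f S := by
    have hq := cosh_quad (mul_nonneg hSpos.le hh.le)
    have hh2 : 0 < h ^ 2 := by positivity
    have : 2 * r ≤ S * h ^ 2 := by
      rw [div_le_iff₀ hh2] at hSbig; linarith
    have hexp : r * S ≤ S ^ 2 * h ^ 2 / 2 := by nlinarith
    have hfSeq : f S = Real.cosh (S * h) - r * S := rfl
    rw [hfSeq]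
    nlinarith
  obtain ⟨s₂, hs₂mem, hfs₂⟩ : ∃ s₂ ∈ Set.Icc sstar S, f s₂ = 0 := by
    have := intermediate_value_Icc hSstar.le hfc.continuousOn
      (show (0:ℝ) ∈ Set.Icc (f sstar) (f S) by exact ⟨hfneg.le, hfS.le⟩)
    obtain ⟨x, hx, hfx⟩ := this
    exact ⟨x, hx, hfx⟩
  have hs₂gt : sstar < s₂ := by
    rcases lt_or_eq_of_le hs₂mem.1 with h' | h'
    · exact h'
    · exfalso; rw [← h'] at hfs₂; linarith
  have h12 : s₁ < s₂ := hs₁lt.trans hs₂gt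
  have heq₁ : r * s₁ = Real.cosh (s₁ * h) := by
    have : Real.cosh (s₁ * h) - r * s₁ = 0 := hfs₁
    linarith
  have heq₂ : r * s₂ = Real.cosh (s₂ * h) := by
    have : Real.cosh (s₂ * h) - r * s₂ = 0 := hfs₂
    linarith
  refine ⟨s₁, s₂, hs₁pos, h12, heq₁, heq₂, ?_⟩
  intro s hs hseq
  by_contra hcon
  push_neg at hcon
  obtain ⟨hne1, hne2⟩ := hcon
  rcases lt_trichotomy s s₁ with h' | h' | h'
  · exact three_zeros hh h' h12 hseq heq₁ heq₂
  · exact hne1 h'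
  · rcases lt_trichotomy s s₂ with h'' | h'' | h''
    · exact three_zeros hh h' h'' heq₁ hseq heq₂
    · exact hne2 h''
    · exact three_zeros hh h12 h'' heq₁ heq₂ hseq
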